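/- Let P be a finite pointed poset and F : P^op → Ab a functor admitting a lower factoring section S. Then F is acyclic: lim^n_P F = 0 for all n > 0. -/

import Mathlib

open CategoryTheory Opposite

universe u

variable {C : Type u} [SmallCategory C]

/-- `n`-cochains of a functor `F : Cᵒᵖ ⥤ Ab`: a value in `F(x₀)` for every chain
`x₀ → x₁ → ⋯ → xₙ` of composable morphisms in `C`. -/
def Cochain (F : Cᵒᵖ ⥤ AddCommGrpCat.{u}) (n : ℕ) : Type u :=
  ∀ c : ComposableArrows C n, F.obj (op (c.obj 0))

noncomputable instance (F : Cᵒᵖ ⥤ AddCommGrpCat.{u}) (n : ℕ) : AddCommGroup (Cochain F n) :=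
  Pi.addCommGroup

/-- The `k`-th face of a chain of `n+1` composable arrows. -/
def faceChain {n : ℕ} (k : Fin (n + 2)) (f : ComposableArrows C (n + 1)) :
    ComposableArrows C n :=
  (Fin.succAboveOrderEmb k).toOrderHom.monotone.functor ⋙ f

/-- The simplicial differential of the standard cochain complex computing higher limits.
(For `k ≥ 1` the `F.map` factor below is the identity, so this is the usual alternating sum.) -/
noncomputable def delta {n : ℕ} (F : Cᵒᵖ ⥤ AddCommGrpCat.{u}) (φ : Cochain F n) :
    Cochain F (n + 1) :=
  fun f => ∑ k : Fin (n + 2),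
    ((-1 : ℤ) ^ (k : ℕ)) •
      (F.map (f.map (homOfLE (Fin.zero_le ((Fin.succAboveOrderEmb k) 0)))).op
        (φ (faceChain k f)))

variable {P : Type u} [PartialOrder P]

/-- A section of a functor `F : Pᵒᵖ ⥤ Ab` on a poset: a covariant functor agreeing with `F`
on objects whose structure maps are right inverses for those of `F`. -/
structure FunctorSection (F : Pᵒᵖ ⥤ AddCommGrpCat.{u}) where
  sec : ∀ {p q : P}, p ≤ q → (F.obj (op p) ⟶ F.obj (op q))
  sec_refl : ∀ p : P, sec (le_refl p) = 𝟙 _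
  sec_comp : ∀ {p q r : P} (h1 : p ≤ q) (h2 : q ≤ r), sec (h1.trans h2) = sec h1 ≫ sec h2
  is_section : ∀ {p q : P} (h : p ≤ q), sec h ≫ F.map (homOfLE h).op = 𝟙 _

/-- A section `S` of `F` is lower factoring if for every `x, y` with common upper bound `z`
there is a common lower bound `w` with `F(ι_{y,z}) ∘ S(ι_{x,z}) = S(ι_{w,y}) ∘ F(ι_{w,x})`. -/
def LowerFactoring (F : Pᵒᵖ ⥤ AddCommGrpCat.{u}) (S : FunctorSection F) : Prop :=
  ∀ (x y z : P) (hx : x ≤ z) (hy : y ≤ z),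
    ∃ (w : P) (hwx : w ≤ x) (hwy : w ≤ y),
      S.sec hx ≫ F.map (homOfLE hy).op = F.map (homOfLE hwx).op ≫ S.sec hwy

namespace LFproof

/-! ### Auxiliary material on chains in a poset -/

/-- Equality of chains in a poset can be checked on objects. -/
lemma chain_ext {n : ℕ} {c₁ c₂ : ComposableArrows P n} (h : ∀ i, c₁.obj i = c₂.obj i) :
    c₁ = c₂ :=
  CategoryTheory.Functor.ext h (fun _ _ _ => Subsingleton.elim _ _)

/-- Monotonicity of the objects of a chain. -/
lemma objLE {n : ℕ} (c : ComposableArrows P n) {i j : Fin (n + 1)} (h : i ≤ j) :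
    c.obj i ≤ c.obj j :=
  leOfHom (c.map (homOfLE h))

lemma face_obj {n : ℕ} (k : Fin (n + 2)) (f : ComposableArrows P (n + 1)) (i : Fin (n + 1)) :
    (faceChain k f).obj i = f.obj (k.succAbove i) := rfl

/-- Prepending an element below a chain to the chain. -/
def consChain {n : ℕ} (p : P) (c : ComposableArrows P n) (h : p ≤ c.obj 0) :
    ComposableArrows P (n + 1) :=
  Monotone.functor (f := fun i : Fin (n + 2) => Fin.cases p c.obj i) <| by
    intro i j hij
    induction i using Fin.cases with
    | zero =>
      induction j using Fin.cases with
      | zero => simp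
      | succ j => simpa using h.trans (objLE c (Fin.zero_le j))
    | succ i =>
      induction j using Fin.cases with
      | zero => exact absurd hij (by simp [Fin.le_zero_iff, Fin.succ_ne_zero])
      | succ j => simpa using objLE c (by simpa using hij)

@[simp] lemma consChain_obj_zero {n : ℕ} (p : P) (c : ComposableArrows P n) (h : p ≤ c.obj 0) :
    (consChain p c h).obj 0 = p := by
  simp [consChain, Monotone.functor]

@[simp] lemma consChain_obj_succ {n : ℕ} (p : P) (c : ComposableArrows P n) (h : p ≤ c.obj 0)
    (i : Fin (n + 1)) : (consChain p c h).obj i.succ = c.obj i := by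
  simp [consChain, Monotone.functor]

lemma face_zero_cons {n : ℕ} (p : P) (c : ComposableArrows P (n + 1)) (h : p ≤ c.obj 0) :
    faceChain 0 (consChain p c h) = c :=
  chain_ext fun i => by
    rw [face_obj, Fin.zero_succAbove, consChain_obj_succ]

lemma face_succ_cons {n : ℕ} (p : P) (c : ComposableArrows P (n + 1)) (h : p ≤ c.obj 0)
    (k : Fin (n + 2)) :
    faceChain k.succ (consChain p c h)
      = consChain p (faceChain k c) (h.trans (objLE c (Fin.zero_le _))) :=
  chain_ext fun i => by
    induction i using Fin.cases with
    | zero =>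
      rw [face_obj, Fin.succ_succAbove_zero, consChain_obj_zero, consChain_obj_zero]
    | succ j =>
      rw [face_obj, Fin.succ_succAbove_succ, consChain_obj_succ, consChain_obj_succ, face_obj]

/-! ### Two `Fin` lemmas -/

lemma val_succAbove {m : ℕ} (p : Fin (m + 1)) (x : Fin m) :
    (p.succAbove x : ℕ) = if (x : ℕ) < (p : ℕ) then (x : ℕ) else (x : ℕ) + 1 := by
  rw [Fin.succAbove]
  split_ifs with h1 h2 h2
  · rfl
  · exact absurd (by exact_mod_cast h1) h2
  · exact absurd (by exact_mod_cast h2) h1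
  · rfl

/-- The basic cosimplicial identity. -/
lemma sAsA {m : ℕ} (i j : Fin (m + 1)) (h : i ≤ j) (x : Fin m) :
    j.succ.succAbove (i.succAbove x) = i.castSucc.succAbove (j.succAbove x) := by
  apply Fin.val_injective
  rw [val_succAbove, val_succAbove, val_succAbove, val_succAbove]
  have h' : (i : ℕ) ≤ (j : ℕ) := h
  simp only [Fin.val_succ, Fin.val_castSucc]
  split_ifs <;> omega

/-! ### Restriction maps and basic cochain algebra -/

variable (F : Pᵒᵖ ⥤ AddCommGrpCat.{u})

/-- Restriction along `p ≤ q`. -/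
def rmap {p q : P} (h : p ≤ q) : F.obj (op q) ⟶ F.obj (op p) :=
  F.map (homOfLE h).op

lemma rmap_rmap {p q r : P} (h1 : p ≤ q) (h2 : q ≤ r) (a : F.obj (op r)) :
    rmap F h1 (rmap F h2 a) = rmap F (h1.trans h2) a := by
  rw [rmap, rmap, rmap,
    show (homOfLE (h1.trans h2)).op = (homOfLE h2).op ≫ (homOfLE h1).op from rfl, F.map_comp]
  rfl

lemma rmap_refl {p : P} (h : p ≤ p) (a : F.obj (op p)) : rmap F h a = a := by
  rw [rmap, show (homOfLE h).op = 𝟙 _ from rfl, F.map_id]; rfl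

/-- The restricted value of a cochain depends only on the chain (and not on the proof
of the inequality along which one restricts). -/
lemma phi_congr {n : ℕ} (φ : Cochain F n) {c₁ c₂ : ComposableArrows P n} (h : c₁ = c₂)
    {v : P} (h₁ : v ≤ c₁.obj 0) (h₂ : v ≤ c₂.obj 0) :
    rmap F h₁ (φ c₁) = rmap F h₂ (φ c₂) := by
  subst h; rfl

variable (S : FunctorSection F)

lemma rmap_sec {p q : P} (h : p ≤ q) (a : F.obj (op p)) :
    rmap F h (S.sec h a) = a := by
  calc rmap F h (S.sec h a) = (S.sec h ≫ F.map (homOfLE h).op) a := rfl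
  _ = a := by rw [S.is_section h]; rfl

lemma sec_rmap {x y z : P} (hS : LowerFactoring F S) (hx : x ≤ z) (hy : y ≤ z) :
    ∃ (w : P) (hwx : w ≤ x) (hwy : w ≤ y), ∀ a : F.obj (op x),
      rmap F hy (S.sec hx a) = S.sec hwy (rmap F hwx a) := by
  obtain ⟨w, hwx, hwy, e⟩ := hS x y z hx hy
  exact ⟨w, hwx, hwy, fun a => congrArg (fun g => g a) e⟩

/-- `f.obj 0` is below the first object of any face of `f`. -/
def zeroLE {n : ℕ} (f : ComposableArrows P (n + 1)) (k : Fin (n + 2)) :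
    f.obj 0 ≤ (faceChain k f).obj 0 :=
  objLE f (Fin.zero_le _)

lemma delta_apply {n : ℕ} (φ : Cochain F n) (f : ComposableArrows P (n + 1)) :
    delta F φ f = ∑ k : Fin (n + 2),
      ((-1 : ℤ) ^ (k : ℕ)) • rmap F (zeroLE f k) (φ (faceChain k f)) := by
  rfl

lemma rmap_delta {n : ℕ} (φ : Cochain F n) (f : ComposableArrows P (n + 1)) {v : P}
    (hv : v ≤ f.obj 0) :
    rmap F hv (delta F φ f) = ∑ k : Fin (n + 2),
      ((-1 : ℤ) ^ (k : ℕ)) • rmap F (hv.trans (zeroLE f k)) (φ (faceChain k f)) := by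
  rw [delta_apply, map_sum]
  exact Finset.sum_congr rfl fun k _ => by rw [map_zsmul, rmap_rmap]

lemma delta_sub {n : ℕ} (φ χ : Cochain F n) :
    delta F (φ - χ) = delta F φ - delta F χ := by
  funext f
  have h : ∀ c : ComposableArrows P n, (φ - χ) c = φ c - χ c := fun _ => rfl
  show _ = delta F φ f - delta F χ f
  rw [delta, delta, delta, ← Finset.sum_sub_distrib]
  exact Finset.sum_congr rfl fun k _ => by rw [h]; exact (congrArg (fun x => ((-1:ℤ) ^ (k:ℕ)) • x) (map_sub _ _ _)).trans (smul_sub _ _ _)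

lemma delta_add {n : ℕ} (φ χ : Cochain F n) :
    delta F (φ + χ) = delta F φ + delta F χ := by
  funext f
  have h : ∀ c : ComposableArrows P n, (φ + χ) c = φ c + χ c := fun _ => rfl
  show _ = delta F φ f + delta F χ f
  rw [delta, delta, delta, ← Finset.sum_add_distrib]
  exact Finset.sum_congr rfl fun k _ => by rw [h]; exact (congrArg (fun x => ((-1:ℤ) ^ (k:ℕ)) • x) (map_add _ _ _)).trans (smul_add _ _ _)

lemma delta_zero {n : ℕ} : delta F (0 : Cochain F n) = 0 := by
  funext f
  have h : ∀ c : ComposableArrows P n, (0 : Cochain F n) c = 0 := fun _ => rfl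
  show _ = (0 : F.obj (op (f.obj 0)))
  rw [delta]
  exact Finset.sum_eq_zero fun k _ => (congrArg (fun x => ((-1:ℤ) ^ (k:ℕ)) • x) (map_zero _)).trans (smul_zero _)

/-- The differential squares to zero. -/
lemma delta_delta {n : ℕ} (φ : Cochain F n) : delta F (delta F φ) = 0 := by
  funext c
  show delta F (delta F φ) c = (0 : F.obj (op (c.obj 0)))
  set f : Fin (n + 3) × Fin (n + 2) → F.obj (op (c.obj 0)) := fun q =>
    ((-1 : ℤ) ^ ((q.1 : ℕ) + (q.2 : ℕ))) •
      rmap F ((zeroLE c q.1).trans (zeroLE (faceChain q.1 c) q.2))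
        (φ (faceChain q.2 (faceChain q.1 c))) with hf
  have expand : delta F (delta F φ) c = ∑ q : Fin (n + 3) × Fin (n + 2), f q := by
    rw [delta_apply, Fintype.sum_prod_type]
    refine Finset.sum_congr rfl fun k _ => ?_
    rw [rmap_delta F φ, Finset.smul_sum]
    refine Finset.sum_congr rfl fun l _ => ?_
    rw [smul_smul, ← pow_add]
  rw [expand]
  have helper : ∀ (k : Fin (n + 3)) (l : Fin (n + 2)) (hkl : (k : ℕ) ≤ (l : ℕ)),
      f (k, l) + f (l.succ, ⟨(k : ℕ), by omega⟩) = 0 := by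
    intro k l hkl
    have hk2 : (k : ℕ) < n + 2 := lt_of_le_of_lt hkl l.isLt
    set k' : Fin (n + 2) := ⟨(k : ℕ), hk2⟩ with hk'
    have hchain : faceChain k' (faceChain l.succ c) = faceChain l (faceChain k c) := by
      apply chain_ext
      intro x
      rw [face_obj, face_obj, face_obj, face_obj]
      have : k'.castSucc = k := by
        apply Fin.val_injective; simp [hk']
      rw [show l.succ.succAbove (k'.succAbove x) = k'.castSucc.succAbove (l.succAbove x) from
        sAsA k' l (by exact hkl) x, this]
    have hval : rmap F ((zeroLE c l.succ).trans (zeroLE (faceChain l.succ c) k'))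
          (φ (faceChain k' (faceChain l.succ c)))
        = rmap F ((zeroLE c k).trans (zeroLE (faceChain k c) l))
          (φ (faceChain l (faceChain k c))) :=
      phi_congr F φ hchain _ _
    show _ + ((-1 : ℤ) ^ ((l.succ : ℕ) + (k' : ℕ))) • _ = 0
    rw [hval]
    have hsign : ((-1 : ℤ) ^ ((l.succ : ℕ) + (k' : ℕ)))
        = -((-1 : ℤ) ^ ((k : ℕ) + (l : ℕ))) := by
      rw [show (l.succ : ℕ) + (k' : ℕ) = ((k : ℕ) + (l : ℕ)) + 1 by
        simp [hk', Fin.val_succ]; omega]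
      rw [pow_succ, mul_neg_one]
    rw [hsign, neg_smul]
    exact add_neg_cancel _
  set g : Fin (n + 3) × Fin (n + 2) → Fin (n + 3) × Fin (n + 2) := fun q =>
    if h : (q.2 : ℕ) < (q.1 : ℕ) then
      (q.2.castSucc, ⟨(q.1 : ℕ) - 1, by omega⟩)
    else
      (q.2.succ, ⟨(q.1 : ℕ), by have := q.2.isLt; omega⟩) with hg
  apply Finset.sum_ninvolution g
  · intro q
    rcases q with ⟨k, l⟩
    by_cases h : (l : ℕ) < (k : ℕ)
    · have hgq : g (k, l) = (l.castSucc, ⟨(k : ℕ) - 1, by omega⟩) := by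
        simp only [hg]; rw [dif_pos h]
      rw [hgq]
      have h2 : ((l.castSucc : Fin (n + 3)) : ℕ) ≤ ((⟨(k : ℕ) - 1, by omega⟩ : Fin (n + 2)) : ℕ) := by
        simp; omega
      have := helper l.castSucc ⟨(k : ℕ) - 1, by omega⟩ h2
      have heq : ((⟨(k : ℕ) - 1, by omega⟩ : Fin (n + 2)).succ,
          (⟨((l.castSucc : Fin (n + 3)) : ℕ), by omega⟩ : Fin (n + 2))) = (k, l) := by
        refine Prod.ext ?_ ?_ <;> apply Fin.val_injective <;> simp <;> omega
      rw [heq] at this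
      exact (add_comm (f (k, l)) _).trans this
    · have hgq : g (k, l) = (l.succ, ⟨(k : ℕ), by have := l.isLt; omega⟩) := by
        simp only [hg]; rw [dif_neg h]
      rw [hgq]
      exact helper k l (by omega)
  · intro q _
    rcases q with ⟨k, l⟩
    by_cases h : (l : ℕ) < (k : ℕ)
    · have hgq : g (k, l) = (l.castSucc, ⟨(k : ℕ) - 1, by omega⟩) := by
        simp only [hg]; rw [dif_pos h]
      rw [hgq]
      intro hcon
      have := congrArg (fun q => (q.1 : ℕ)) hcon
      simp at this; omega
    · have hgq : g (k, l) = (l.succ, ⟨(k : ℕ), by have := l.isLt; omega⟩) := by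
        simp only [hg]; rw [dif_neg h]
      rw [hgq]
      intro hcon
      have := congrArg (fun q => (q.1 : ℕ)) hcon
      simp at this; omega
  · intro q; exact Finset.mem_univ _
  · intro q
    rcases q with ⟨k, l⟩
    by_cases h : (l : ℕ) < (k : ℕ)
    · have hgq : g (k, l) = (l.castSucc, ⟨(k : ℕ) - 1, by omega⟩) := by
        simp only [hg]; rw [dif_pos h]
      rw [hgq]
      have h2 : ¬ (((⟨(k : ℕ) - 1, by omega⟩ : Fin (n + 2)) : ℕ) < ((l.castSucc : Fin (n + 3)) : ℕ)) := by
        simp; omega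
      have hgq2 : g (l.castSucc, ⟨(k : ℕ) - 1, by omega⟩)
          = ((⟨(k : ℕ) - 1, by omega⟩ : Fin (n + 2)).succ, ⟨((l.castSucc : Fin (n + 3)) : ℕ), by omega⟩) := by
        simp only [hg]; rw [dif_neg h2]
      rw [hgq2]
      refine Prod.ext ?_ ?_ <;> apply Fin.val_injective <;> simp <;> omega
    · have hgq : g (k, l) = (l.succ, ⟨(k : ℕ), by have := l.isLt; omega⟩) := by
        simp only [hg]; rw [dif_neg h]
      rw [hgq]
      have h2 : ((⟨(k : ℕ), by have := l.isLt; omega⟩ : Fin (n + 2)) : ℕ) < ((l.succ : Fin (n + 3)) : ℕ) := by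
        simp [Fin.val_succ]; omega
      have hgq2 : g (l.succ, ⟨(k : ℕ), by have := l.isLt; omega⟩)
          = ((⟨(k : ℕ), by have := l.isLt; omega⟩ : Fin (n + 2)).castSucc,
              ⟨((l.succ : Fin (n + 3)) : ℕ) - 1, by omega⟩) := by
        simp only [hg]; rw [dif_pos h2]
      rw [hgq2]
      refine Prod.ext ?_ ?_ <;> apply Fin.val_injective <;> simp <;> omega

/-! ### The contracting construction -/

/-- The "cone on `p`" homotopy: extend the value of `ψ` on `p ⋬ c` along the section. -/
noncomputable def cone (p : P) {n : ℕ} (ψ : Cochain F (n + 1)) : Cochain F n := fun c =>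
  letI := Classical.dec (p ≤ c.obj 0)
  if h : p ≤ c.obj 0 then
    S.sec h (rmap F (consChain_obj_zero p c h).ge (ψ (consChain p c h)))
  else 0

/-- The invariant: all restrictions of values of `ψ` to elements of `A` vanish. -/
def Inv (A : Finset P) {m : ℕ} (ψ : Cochain F m) : Prop :=
  ∀ (c : ComposableArrows P m) (v : P), v ∈ A → ∀ hv : v ≤ c.obj 0, rmap F hv (ψ c) = 0

lemma step (hS : LowerFactoring F S) (p : P) (A : Finset P) [DecidableEq P]
    (hA : ∀ x ∈ A, ∀ y, y ≤ x → y ∈ A) {n : ℕ} (ψ : Cochain F (n + 1))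
    (hd : delta F ψ = 0) (hI : Inv F A ψ) :
    Inv F (insert p A) (ψ - delta F (cone F S p ψ)) := by
  intro c v hv hvle
  have hsub : (ψ - delta F (cone F S p ψ)) c = ψ c - delta F (cone F S p ψ) c := rfl
  rw [hsub, map_sub]
  rcases Finset.mem_insert.1 hv with rfl | hvA
  · -- `v = v` : the cone produces exactly the missing coboundary, by the cocycle identity
    have h0 : v ≤ (consChain v c hvle).obj 0 := (consChain_obj_zero v c hvle).ge
    have hzero : rmap F h0 (delta F ψ (consChain v c hvle)) = 0 := by
      rw [hd]; exact map_zero _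
    rw [rmap_delta] at hzero
    rw [Fin.sum_univ_succ] at hzero
    have e0 : rmap F (h0.trans (zeroLE (consChain v c hvle) 0))
        (ψ (faceChain 0 (consChain v c hvle))) = rmap F hvle (ψ c) :=
      phi_congr F ψ (face_zero_cons v c hvle) _ _
    have ek : ∀ k : Fin (n + 2),
        rmap F (h0.trans (zeroLE (consChain v c hvle) k.succ))
          (ψ (faceChain k.succ (consChain v c hvle)))
        = rmap F (consChain_obj_zero v (faceChain k c)
              (hvle.trans (objLE c (Fin.zero_le _)))).ge
            (ψ (consChain v (faceChain k c) (hvle.trans (objLE c (Fin.zero_le _))))) :=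
      fun k => phi_congr F ψ (face_succ_cons v c hvle k) _ _
    rw [e0] at hzero
    simp only [ek, Fin.val_succ, Fin.val_zero, pow_zero, one_smul, pow_succ, mul_neg_one,
      neg_smul, Finset.sum_neg_distrib] at hzero
    rw [rmap_delta]
    have hterm : ∀ k : Fin (n + 2),
        rmap F (hvle.trans (zeroLE c k)) (cone F S v ψ (faceChain k c))
        = rmap F (consChain_obj_zero v (faceChain k c)
              (hvle.trans (objLE c (Fin.zero_le _)))).ge
            (ψ (consChain v (faceChain k c) (hvle.trans (objLE c (Fin.zero_le _))))) := by
      intro k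
      simp only [cone]
      rw [dif_pos (hvle.trans (zeroLE c k))]
      exact rmap_sec F S _ _
    simp only [hterm]
    rw [sub_eq_zero]
    exact (add_neg_eq_zero.mp hzero)
  · -- `v ∈ A` : every term of the coboundary dies on `A` by lower factoring
    rw [hI c v hvA hvle, rmap_delta, zero_sub, neg_eq_zero]
    apply Finset.sum_eq_zero
    intro k _
    simp only [cone]
    by_cases hp : p ≤ (faceChain k c).obj 0
    · rw [dif_pos hp]
      obtain ⟨w, hwp, hwv, e⟩ := sec_rmap F S hS hp (hvle.trans (zeroLE c k))
      rw [e, rmap_rmap, hI _ w (hA v hvA w hwv) _, map_zero, smul_zero]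
    · rw [dif_neg hp, map_zero, smul_zero]

lemma main (hS : LowerFactoring F S) [DecidableEq P] [Fintype P] (N : ℕ) :
    ∀ (A : Finset P), Aᶜ.card = N → (∀ x ∈ A, ∀ y, y ≤ x → y ∈ A) →
      ∀ {n : ℕ} (ψ : Cochain F (n + 1)), delta F ψ = 0 → Inv F A ψ →
        ∃ b : Cochain F n, delta F b = ψ := by
  induction N with
  | zero =>
    intro A hcard hA n ψ hd hI
    have hA' : ∀ v : P, v ∈ A := by
      intro v
      by_contra hv
      have hm : v ∈ Aᶜ := Finset.mem_compl.2 hv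
      rw [Finset.card_eq_zero] at hcard
      rw [hcard] at hm
      exact absurd hm (Finset.notMem_empty v)
    refine ⟨0, ?_⟩
    rw [delta_zero]
    funext f
    have h := hI f (f.obj 0) (hA' _) (le_refl _)
    rw [rmap_refl] at h
    exact h.symm
  | succ N ih =>
    intro A hcard hA n ψ hd hI
    have hne : Aᶜ.Nonempty := Finset.card_pos.1 (by omega)
    obtain ⟨p, hp, hmin⟩ : ∃ p ∈ Aᶜ, ∀ x ∈ Aᶜ, ¬x < p := by
      obtain ⟨p, hm⟩ := Finset.exists_minimal hne
      exact ⟨p, hm.prop, fun x hx hlt => (minimal_iff_forall_lt.1 hm).2 hlt hx⟩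
    have hA' : ∀ x ∈ insert p A, ∀ y, y ≤ x → y ∈ insert p A := by
      intro x hx y hyx
      rcases Finset.mem_insert.1 hx with rfl | hxA
      · rcases eq_or_lt_of_le hyx with rfl | hlt
        · exact Finset.mem_insert_self _ _
        · by_cases hyA : y ∈ A
          · exact Finset.mem_insert_of_mem hyA
          · exact absurd hlt (hmin y (Finset.mem_compl.2 hyA))
      · exact Finset.mem_insert_of_mem (hA x hxA y hyx)
    have hcard' : (insert p A)ᶜ.card = N := by
      rw [Finset.compl_insert, Finset.card_erase_of_mem hp, hcard]
      omega
    have hd' : delta F (ψ - delta F (cone F S p ψ)) = 0 := by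
      rw [delta_sub, hd, delta_delta, sub_zero]
    obtain ⟨b', hb'⟩ := ih (insert p A) hcard' hA' (ψ - delta F (cone F S p ψ)) hd'
      (step F S hS p A hA ψ hd hI)
    refine ⟨b' + cone F S p ψ, ?_⟩
    rw [delta_add, hb']
    exact sub_add_cancel ψ (delta F (cone F S p ψ))

end LFproof

/-- **Theorem (acyclicity).** If `P` is a finite pointed poset and `F : Pᵒᵖ ⥤ Ab` has a
lower factoring section, then all higher limits of `F` vanish: every `n`-cocycle with
`n > 0` is a coboundary. -/
theorem vanishing_of_lowerFactoring
    [OrderBot P] [Fintype P]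
    (F : Pᵒᵖ ⥤ AddCommGrpCat.{u}) (S : FunctorSection F) (hS : LowerFactoring F S) :
    ∀ (n : ℕ) (c : Cochain F (n + 1)), delta F c = 0 → ∃ b : Cochain F n, delta F b = c := by
  classical
  intro n c hc
  exact LFproof.main F S hS ((∅ : Finset P)ᶜ.card) ∅ rfl
    (fun x hx => absurd hx (Finset.notMem_empty x)) c hc
    (fun _ v hv _ => absurd hv (Finset.notMem_empty v))
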